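/- In the group PGL_2(k) (equivalently PSL_2(k)) over an algebraically closed field k of characteristic ≠ 2, the number of conjugacy classes of centralizers of semisimple elements is 3, while the number of conjugacy classes of stabilizers of torus elements in the Weyl group S_2 is 2. -/

import Mathlib

/-!
STATEMENT 7: In `PGL₂(k) = GL₂(k)/k^×` over an algebraically closed field `k` of
characteristic `≠ 2`, the number of conjugacy classes of centralizers of semisimple
elements is `3`, while the number of conjugacy classes of stabilizers of torus
elements in the Weyl group `S₂` is `2`.

A semisimple element of `PGL₂(k)` is the image of a diagonalizable matrix.  The Weyl
group `S₂ = Perm (Fin 2)` acts on the torus `kˣ` (the diagonal torus of `PGL₂` is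
`{diag(a,1)} ≅ kˣ`) with the nontrivial element acting by `a ↦ a⁻¹`; this action is
realized through the sign homomorphism `Perm (Fin 2) →* ℤˣ` and `u • a = a ^ (u : ℤ)`.
-/

open Pointwise

variable {k : Type*} [Field k]

/-- The diagonal matrix `diag d` as an element of `GL₂(k)`. -/
def diagGL (d : Fin 2 → kˣ) : GL (Fin 2) k :=
  ⟨Matrix.diagonal fun i => (d i : k), Matrix.diagonal fun i => ((d i)⁻¹ : k),
    by rw [Matrix.diagonal_mul_diagonal]; simp,
    by rw [Matrix.diagonal_mul_diagonal]; simp⟩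

/-- An element of `PGL₂(k)` is semisimple iff it is the image of a diagonalizable
matrix. -/
def IsSemisimplePGL2 (g : GL (Fin 2) k ⧸ Subgroup.center (GL (Fin 2) k)) : Prop :=
  ∃ (P : GL (Fin 2) k) (d : Fin 2 → kˣ),
    QuotientGroup.mk (P * diagGL d * P⁻¹) = g

/-- `ℤˣ` acts on `kˣ` by `u • a = a ^ (u : ℤ)`. -/
instance zUnitsAction : MulAction ℤˣ (kˣ) where
  smul u a := a ^ (u : ℤ)
  one_smul a := by show a ^ ((1 : ℤˣ) : ℤ) = a; simp
  mul_smul u v a := by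
    show a ^ ((u * v : ℤˣ) : ℤ) = (a ^ (v : ℤ)) ^ (u : ℤ)
    rw [← zpow_mul, Units.val_mul, mul_comm]

/-- The Weyl group `S₂` acts on the torus `kˣ` of `PGL₂` through the sign character:
the transposition acts by `a ↦ a⁻¹`. -/
instance weylS2Action : MulAction (Equiv.Perm (Fin 2)) (kˣ) :=
  MulAction.compHom (kˣ) (Equiv.Perm.sign (α := Fin 2))

/-! ### Auxiliary general group lemmas -/

section GeneralGroup

variable {G : Type*} [Group G]

lemma centralizer_conj' (h g : G) :
    Subgroup.centralizer {h * g * h⁻¹} =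
      ConjAct.toConjAct h • Subgroup.centralizer ({g} : Set G) := by
  ext x
  rw [Subgroup.mem_pointwise_smul_iff_inv_smul_mem]
  simp only [Subgroup.mem_centralizer_iff, Set.mem_singleton_iff, forall_eq]
  rw [← ConjAct.toConjAct_inv, ConjAct.toConjAct_smul]
  constructor
  · intro hx
    have := congrArg (fun y => h⁻¹ * y * h) hx
    simpa [mul_assoc] using this
  · intro hx
    have := congrArg (fun y => h * y * h⁻¹) hx
    simpa [mul_assoc] using this

lemma conj_smul_top (h : ConjAct G) : h • (⊤ : Subgroup G) = ⊤ := by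
  ext x; simp [Subgroup.mem_pointwise_smul_iff_inv_smul_mem]

lemma conj_abelian {S : Subgroup G} (hS : ∀ x ∈ S, ∀ y ∈ S, x * y = y * x)
    (h : ConjAct G) : ∀ x ∈ h • S, ∀ y ∈ h • S, x * y = y * x := by
  intro x hx y hy
  rw [Subgroup.mem_pointwise_smul_iff_inv_smul_mem] at hx hy
  have h1 := hS _ hx _ hy
  rw [← smul_mul', ← smul_mul'] at h1
  exact MulAction.injective (β := G) h⁻¹ h1

lemma mk_orbit_smul {α : Type*} [MulAction G α] (h : G) (a : α) :
    Quotient.mk (MulAction.orbitRel G α) (h • a) = Quotient.mk (MulAction.orbitRel G α) a :=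
  Quotient.sound (MulAction.mem_orbit_iff.mpr ⟨h, rfl⟩)

lemma mk_orbit_exact {α : Type*} [MulAction G α] {a b : α}
    (hab : Quotient.mk (MulAction.orbitRel G α) a = Quotient.mk (MulAction.orbitRel G α) b) :
    ∃ h : G, h • b = a :=
  MulAction.mem_orbit_iff.mp (Quotient.exact hab)

lemma centralizer_one_eq_top : Subgroup.centralizer ({1} : Set G) = ⊤ := by
  ext x; simp [Subgroup.mem_centralizer_iff]

end GeneralGroup

/-! ### PGL₂-specific lemmas -/

namespace PGLAux

open Matrix MulAction

lemma diagGL_val (d : Fin 2 → kˣ) :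
    (diagGL d : Matrix (Fin 2) (Fin 2) k) = Matrix.diagonal (fun i => (d i : k)) := rfl

lemma diagGL_mul (d e : Fin 2 → kˣ) : diagGL d * diagGL e = diagGL (d * e) :=
  Units.ext (by
    simp only [Units.val_mul, diagGL_val, Matrix.diagonal_mul_diagonal, Pi.mul_apply,
      Units.val_mul])

lemma diagGL_one : (diagGL (fun _ => 1) : GL (Fin 2) k) = 1 :=
  Units.ext (by simp [diagGL_val])

lemma scalar_mem_center (c : kˣ) :
    diagGL (fun _ => c) ∈ Subgroup.center (GL (Fin 2) k) := by
  rw [Subgroup.mem_center_iff]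
  intro g
  refine Units.ext ?_
  show (g : Matrix (Fin 2) (Fin 2) k) * Matrix.diagonal _ = Matrix.diagonal _ * (g : Matrix (Fin 2) (Fin 2) k)
  ext i j
  simp [Matrix.mul_diagonal, Matrix.diagonal_mul, mul_comm]

lemma center_eq_scalar {z : GL (Fin 2) k} (hz : z ∈ Subgroup.center (GL (Fin 2) k)) :
    ∃ c : kˣ, z = diagGL (fun _ => c) := by
  have hcz := Subgroup.mem_center_iff.mp hz
  have hcomm : Pairwise fun i j : Fin 2 =>
      Commute (Matrix.single i j (1:k)) (z : Matrix (Fin 2) (Fin 2) k) := by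
    intro i j hij
    set E := Matrix.single i j (1:k) with hE
    have hE2 : E * E = 0 := Matrix.single_mul_single_of_ne (h := hij.symm) (d := (1:k)) ..
    have h1 : ((1 : Matrix (Fin 2) (Fin 2) k) + E) * (1 - E) = 1 := by
      rw [add_mul, mul_sub, mul_sub, one_mul, mul_one, one_mul, hE2]
      abel
    have h2 : ((1 : Matrix (Fin 2) (Fin 2) k) - E) * (1 + E) = 1 := by
      rw [sub_mul, mul_add, mul_add, one_mul, mul_one, one_mul, hE2]
      abel
    have hU := hcz ⟨1 + E, 1 - E, h1, h2⟩
    have hv : ((1 : Matrix (Fin 2) (Fin 2) k) + E) * z = (z : Matrix (Fin 2) (Fin 2) k) * (1 + E) := by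
      have := congrArg Units.val hU
      simpa [Units.val_mul] using this
    have : E * (z : Matrix (Fin 2) (Fin 2) k) = (z : Matrix (Fin 2) (Fin 2) k) * E := by
      have h := hv
      rw [add_mul, mul_add, one_mul, mul_one] at h
      exact add_left_cancel h
    exact this
  obtain ⟨r, hr⟩ := Matrix.mem_range_scalar_of_commute_single hcomm
  have hrne : r ≠ 0 := by
    intro h0
    have hdet : IsUnit (z : Matrix (Fin 2) (Fin 2) k).det :=
      Matrix.isUnit_iff_isUnit_det _ |>.mp z.isUnit
    rw [← hr, h0, map_zero] at hdet
    simp [Matrix.det_zero] at hdet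
  refine ⟨Units.mk0 r hrne, Units.ext ?_⟩
  rw [diagGL_val, ← hr, Matrix.scalar_apply]
  rfl

def pr : GL (Fin 2) k →* GL (Fin 2) k ⧸ Subgroup.center (GL (Fin 2) k) :=
  QuotientGroup.mk' _

lemma pr_eq_iff {X Y : GL (Fin 2) k} :
    pr X = pr Y ↔ ∃ c : kˣ, X * diagGL (fun _ => c) = Y := by
  rw [pr, QuotientGroup.mk'_eq_mk']
  constructor
  · rintro ⟨z, hz, h⟩
    obtain ⟨c, rfl⟩ := center_eq_scalar hz
    exact ⟨c, h⟩
  · rintro ⟨c, h⟩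
    exact ⟨_, scalar_mem_center c, h⟩

def tEl (a : kˣ) : GL (Fin 2) k ⧸ Subgroup.center (GL (Fin 2) k) := pr (diagGL ![a, 1])

lemma pr_diagGL (d : Fin 2 → kˣ) : pr (diagGL d) = tEl (d 0 * (d 1)⁻¹) := by
  refine pr_eq_iff.mpr ⟨(d 1)⁻¹, ?_⟩
  rw [diagGL_mul]
  congr 1
  funext i
  fin_cases i <;> simp

lemma tEl_one : (tEl 1 : GL (Fin 2) k ⧸ Subgroup.center (GL (Fin 2) k)) = 1 := by
  rw [tEl]
  have : (![1, 1] : Fin 2 → kˣ) = fun _ => 1 := by funext i; fin_cases i <;> rfl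
  rw [this, diagGL_one, _root_.map_one]

def diagHom : (Fin 2 → kˣ) →* GL (Fin 2) k where
  toFun := diagGL
  map_one' := diagGL_one
  map_mul' := fun d e => (diagGL_mul d e).symm

def TSub : Subgroup (GL (Fin 2) k ⧸ Subgroup.center (GL (Fin 2) k)) :=
  (pr.comp (diagHom (k := k))).range

lemma TSub_abelian : ∀ x ∈ (TSub : Subgroup (GL (Fin 2) k ⧸ Subgroup.center (GL (Fin 2) k))),
    ∀ y ∈ TSub, x * y = y * x := by
  rintro x ⟨d, rfl⟩ y ⟨e, rfl⟩
  show pr (diagGL d) * pr (diagGL e) = pr (diagGL e) * pr (diagGL d)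
  rw [← _root_.map_mul, ← _root_.map_mul, diagGL_mul, diagGL_mul, mul_comm]

lemma tEl_mem_TSub (a : kˣ) :
    tEl a ∈ (TSub : Subgroup (GL (Fin 2) k ⧸ Subgroup.center (GL (Fin 2) k))) :=
  ⟨![a, 1], rfl⟩

lemma centralizer_tEl (hchar : (2 : k) ≠ 0) {r : kˣ} (h1 : (r : k) ≠ 1) (h2 : (r : k) ≠ -1) :
    Subgroup.centralizer {tEl r} =
      (TSub : Subgroup (GL (Fin 2) k ⧸ Subgroup.center (GL (Fin 2) k))) := by
  ext x
  rw [Subgroup.mem_centralizer_iff]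
  constructor
  · intro hx
    obtain ⟨X, rfl⟩ := QuotientGroup.mk'_surjective (Subgroup.center (GL (Fin 2) k)) x
    have hcomm : tEl r * pr X = pr X * tEl r := hx _ (Set.mem_singleton _)
    rw [tEl, ← _root_.map_mul, ← _root_.map_mul] at hcomm
    obtain ⟨c, hc⟩ := pr_eq_iff.mp hcomm
    have hmat := congrArg Units.val hc
    simp only [Units.val_mul, diagGL_val] at hmat
    set M : Matrix (Fin 2) (Fin 2) k := (X : Matrix (Fin 2) (Fin 2) k) with hM
    have hE : ∀ i j : Fin 2,
        ((![r,1] : Fin 2 → kˣ) i : k) * M i j * c = M i j * ((![r,1] : Fin 2 → kˣ) j : k) := by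
      intro i j
      have := congrFun (congrFun hmat i) j
      simpa [Matrix.mul_diagonal, Matrix.diagonal_mul, mul_assoc] using this
    have hdetM : M.det ≠ 0 := by
      have : IsUnit M.det := (Matrix.isUnit_iff_isUnit_det _).mp X.isUnit
      exact this.ne_zero
    have hdet := congrArg Matrix.det hmat
    simp only [Matrix.det_mul, Matrix.det_diagonal, Fin.prod_univ_two] at hdet
    simp only [Matrix.cons_val_zero, Matrix.cons_val_one, Matrix.head_cons, Units.val_one] at hdet
    have hc2 : (c : k) * c = 1 := by
      have key : ((r : k) * 1 * M.det) * ((c : k) * c) = ((r : k) * 1 * M.det) * 1 := by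
        linear_combination hdet
      exact mul_left_cancel₀ (by simp [r.ne_zero, hdetM]) key
    have hcc : (c : k) = 1 ∨ (c : k) = -1 := by
      have hz : ((c : k) - 1) * ((c : k) + 1) = 0 := by linear_combination hc2
      rcases mul_eq_zero.mp hz with h | h
      · exact Or.inl (sub_eq_zero.mp h)
      · exact Or.inr (eq_neg_of_add_eq_zero_left h)
    have e00 := hE 0 0
    have e11 := hE 1 1
    have e01 := hE 0 1
    have e10 := hE 1 0
    simp only [Matrix.cons_val_zero, Matrix.cons_val_one, Matrix.head_cons, Units.val_one]
      at e00 e11 e01 e10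
    rcases hcc with hc1 | hcm1
    · rw [hc1] at e01 e10
      have h01 : M 0 1 = 0 := by
        rcases mul_eq_zero.mp (show ((r : k) - 1) * M 0 1 = 0 by linear_combination e01) with h | h
        · exact absurd (sub_eq_zero.mp h) h1
        · exact h
      have h10 : M 1 0 = 0 := by
        rcases mul_eq_zero.mp (show (1 - (r : k)) * M 1 0 = 0 by linear_combination e10) with h | h
        · exact absurd (sub_eq_zero.mp h).symm h1
        · exact h
      have hdet2 : M.det = M 0 0 * M 1 1 := by
        rw [Matrix.det_fin_two, h01]; ring
      have h00 : M 0 0 ≠ 0 := by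
        intro h; apply hdetM; rw [hdet2, h, zero_mul]
      have h11 : M 1 1 ≠ 0 := by
        intro h; apply hdetM; rw [hdet2, h, mul_zero]
      refine ⟨![Units.mk0 (M 0 0) h00, Units.mk0 (M 1 1) h11], ?_⟩
      show pr (diagGL ![Units.mk0 (M 0 0) h00, Units.mk0 (M 1 1) h11]) = pr X
      refine congrArg pr (Units.ext ?_)
      rw [diagGL_val]
      show _ = M
      ext i j
      fin_cases i <;> fin_cases j <;>
        simp [Matrix.diagonal_apply_eq, Matrix.diagonal_apply_ne, h01, h10]
    · exfalso
      rw [hcm1] at e00 e11 e01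
      have h00 : M 0 0 = 0 := by
        have h2r : (2 : k) * ((r : k) * M 0 0) = 0 := by linear_combination -e00
        rcases mul_eq_zero.mp h2r with h | h
        · exact absurd h hchar
        · rcases mul_eq_zero.mp h with h | h
          · exact absurd h r.ne_zero
          · exact h
      have h11 : M 1 1 = 0 := by
        have h2m : (2 : k) * M 1 1 = 0 := by linear_combination -e11
        rcases mul_eq_zero.mp h2m with h | h
        · exact absurd h hchar
        · exact h
      have h01 : M 0 1 = 0 := by
        have hra : ((r : k) + 1) * M 0 1 = 0 := by linear_combination -e01
        rcases mul_eq_zero.mp hra with h | h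
        · exact absurd (eq_neg_of_add_eq_zero_left h) h2
        · exact h
      apply hdetM
      rw [Matrix.det_fin_two, h00, h01]
      ring
  · rintro ⟨d, rfl⟩ g hg
    rw [Set.mem_singleton_iff] at hg
    subst hg
    show tEl r * pr (diagGL d) = pr (diagGL d) * tEl r
    rw [tEl, ← _root_.map_mul, ← _root_.map_mul, diagGL_mul, diagGL_mul, mul_comm]

/-! ### Witness matrices -/

def wGL : GL (Fin 2) k :=
  ⟨!![0, 1; 1, 0], !![0, 1; 1, 0],
    by rw [show (!![0, 1; 1, 0] : Matrix (Fin 2) (Fin 2) k) * !![0, 1; 1, 0] = !![1,0;0,1] by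
        simp [Matrix.mul_fin_two]]; rw [Matrix.one_fin_two],
    by rw [show (!![0, 1; 1, 0] : Matrix (Fin 2) (Fin 2) k) * !![0, 1; 1, 0] = !![1,0;0,1] by
        simp [Matrix.mul_fin_two]]; rw [Matrix.one_fin_two]⟩

def uGL : GL (Fin 2) k :=
  ⟨!![1, 1; 0, 1], !![1, -1; 0, 1],
    by rw [show (!![1, 1; 0, 1] : Matrix (Fin 2) (Fin 2) k) * !![1, -1; 0, 1] = !![1,0;0,1] by
        simp [Matrix.mul_fin_two]]; rw [Matrix.one_fin_two],
    by rw [show (!![1, -1; 0, 1] : Matrix (Fin 2) (Fin 2) k) * !![1, 1; 0, 1] = !![1,0;0,1] by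
        simp [Matrix.mul_fin_two]]; rw [Matrix.one_fin_two]⟩

lemma diagGL_pair_val (a b : kˣ) :
    (diagGL ![a, b] : Matrix (Fin 2) (Fin 2) k) = !![(a : k), 0; 0, (b : k)] := by
  rw [diagGL_val]
  ext i j
  fin_cases i <;> fin_cases j <;>
    simp [Matrix.diagonal_apply_eq, Matrix.diagonal_apply_ne]

lemma diagGL_const_val (c : kˣ) :
    (diagGL (fun _ => c) : Matrix (Fin 2) (Fin 2) k) = !![(c : k), 0; 0, (c : k)] := by
  rw [diagGL_val]
  ext i j
  fin_cases i <;> fin_cases j <;>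
    simp [Matrix.diagonal_apply_eq, Matrix.diagonal_apply_ne]

lemma w_t_not_comm {a : kˣ} (ha : (a : k) * a ≠ 1) :
    tEl a * pr (wGL : GL (Fin 2) k) ≠ pr wGL * tEl a := by
  intro h
  rw [tEl, ← _root_.map_mul, ← _root_.map_mul] at h
  obtain ⟨c, hc⟩ := pr_eq_iff.mp h
  have hmat := congrArg Units.val hc
  simp only [Units.val_mul, diagGL_pair_val, diagGL_const_val] at hmat
  rw [show ((wGL : GL (Fin 2) k) : Matrix (Fin 2) (Fin 2) k) = !![0,1;1,0] from rfl] at hmat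
  simp only [Matrix.mul_fin_two] at hmat
  have h01 := congrFun (congrFun hmat 0) 1
  have h10 := congrFun (congrFun hmat 1) 0
  simp at h01 h10
  apply ha
  rw [h10] at h01
  exact h01


lemma w_mem_N : pr (wGL : GL (Fin 2) k) ∈ Subgroup.centralizer {tEl (-1 : kˣ)} := by
  rw [Subgroup.mem_centralizer_iff]
  rintro g hg
  rw [Set.mem_singleton_iff] at hg
  subst hg
  rw [tEl, ← _root_.map_mul, ← _root_.map_mul]
  refine pr_eq_iff.mpr ⟨-1, Units.ext ?_⟩
  simp only [Units.val_mul, diagGL_pair_val, diagGL_const_val]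
  rw [show ((wGL : GL (Fin 2) k) : Matrix (Fin 2) (Fin 2) k) = !![0,1;1,0] from rfl]
  norm_num [Matrix.mul_fin_two]

lemma t_mem_N (a : kˣ) : tEl a ∈ Subgroup.centralizer {tEl (-1 : kˣ)} := by
  rw [Subgroup.mem_centralizer_iff]
  rintro g hg
  rw [Set.mem_singleton_iff] at hg
  subst hg
  rw [tEl, tEl, ← _root_.map_mul, ← _root_.map_mul, diagGL_mul, diagGL_mul, mul_comm]

lemma u_not_mem_N (hchar : (2 : k) ≠ 0) :
    pr (uGL : GL (Fin 2) k) ∉ Subgroup.centralizer {tEl (-1 : kˣ)} := by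
  intro h
  have hcomm := Subgroup.mem_centralizer_iff.mp h _ (Set.mem_singleton _)
  rw [tEl, ← _root_.map_mul, ← _root_.map_mul] at hcomm
  obtain ⟨c, hc⟩ := pr_eq_iff.mp hcomm
  have hmat := congrArg Units.val hc
  simp only [Units.val_mul, diagGL_pair_val, diagGL_const_val] at hmat
  rw [show ((uGL : GL (Fin 2) k) : Matrix (Fin 2) (Fin 2) k) = !![1,1;0,1] from rfl] at hmat
  simp only [Matrix.mul_fin_two] at hmat
  have h11 := congrFun (congrFun hmat 1) 1
  have h01 := congrFun (congrFun hmat 0) 1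
  norm_num [Units.val_neg, Units.val_one] at h11 h01
  rw [h11] at h01
  norm_num at h01
  apply hchar
  linear_combination -h01

lemma exists_a0 [Infinite k] : ∃ a : kˣ, (a : k) * a ≠ 1 := by
  classical
  obtain ⟨x, hx⟩ := Infinite.exists_notMem_finset ({0, 1, -1} : Finset k)
  simp only [Finset.mem_insert, Finset.mem_singleton, not_or] at hx
  obtain ⟨hx0, hx1, hxm1⟩ := hx
  refine ⟨Units.mk0 x hx0, ?_⟩
  intro h1
  have hz : (x - 1) * (x + 1) = 0 := by
    have : x * x = 1 := h1
    linear_combination this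
  rcases mul_eq_zero.mp hz with h | h
  · exact hx1 (sub_eq_zero.mp h)
  · exact hxm1 (eq_neg_of_add_eq_zero_left h)

/-! ### Weyl group part -/

lemma perm2_cases (σ : Equiv.Perm (Fin 2)) : σ = 1 ∨ σ = Equiv.swap 0 1 := by
  revert σ; decide

lemma perm_smul_def (σ : Equiv.Perm (Fin 2)) (a : kˣ) :
    σ • a = a ^ ((Equiv.Perm.sign σ : ℤˣ) : ℤ) := rfl

lemma swap_smul (a : kˣ) : (Equiv.swap (0 : Fin 2) 1) • a = a⁻¹ := by
  rw [perm_smul_def, Equiv.Perm.sign_swap (by decide)]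
  norm_num

lemma stab_eq_top_of {a : kˣ} (ha : a⁻¹ = a) :
    MulAction.stabilizer (Equiv.Perm (Fin 2)) a = ⊤ := by
  ext σ
  simp only [Subgroup.mem_top, iff_true, MulAction.mem_stabilizer_iff]
  rcases perm2_cases σ with h | h <;> subst h
  · exact one_smul _ _
  · rw [swap_smul, ha]

lemma stab_eq_bot_of {a : kˣ} (ha : a⁻¹ ≠ a) :
    MulAction.stabilizer (Equiv.Perm (Fin 2)) a = ⊥ := by
  ext σ
  simp only [Subgroup.mem_bot, MulAction.mem_stabilizer_iff]
  constructor
  · intro h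
    rcases perm2_cases σ with h1 | h1
    · exact h1
    · exfalso; apply ha; rw [← swap_smul a, ← h1, h]
  · rintro rfl; exact one_smul _ _


/-! ### Classification of classes -/

lemma part1_subset (hchar : (2 : k) ≠ 0) {a₀ : kˣ} (ha1 : (a₀ : k) ≠ 1) (ham1 : (a₀ : k) ≠ -1) :
    {C : Quotient (MulAction.orbitRel
        (ConjAct (GL (Fin 2) k ⧸ Subgroup.center (GL (Fin 2) k)))
        (Subgroup (GL (Fin 2) k ⧸ Subgroup.center (GL (Fin 2) k)))) |
      ∃ g : GL (Fin 2) k ⧸ Subgroup.center (GL (Fin 2) k), IsSemisimplePGL2 g ∧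
        C = Quotient.mk (MulAction.orbitRel
            (ConjAct (GL (Fin 2) k ⧸ Subgroup.center (GL (Fin 2) k)))
            (Subgroup (GL (Fin 2) k ⧸ Subgroup.center (GL (Fin 2) k))))
          (Subgroup.centralizer {g})} =
    {Quotient.mk _ (Subgroup.centralizer {tEl (1 : kˣ)}),
     Quotient.mk _ (Subgroup.centralizer {tEl a₀}),
     Quotient.mk _ (Subgroup.centralizer {tEl (-1 : kˣ)})} := by
  ext C
  simp only [Set.mem_setOf_eq, Set.mem_insert_iff, Set.mem_singleton_iff]
  constructor
  · rintro ⟨g, ⟨P, d, rfl⟩, rfl⟩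
    have hg : (QuotientGroup.mk (P * diagGL d * P⁻¹) :
        GL (Fin 2) k ⧸ Subgroup.center (GL (Fin 2) k)) =
        pr P * tEl (d 0 * (d 1)⁻¹) * (pr P)⁻¹ := by
      rw [← pr_diagGL]
      show pr (P * diagGL d * P⁻¹) = _
      rw [_root_.map_mul, _root_.map_mul, map_inv]
    rw [hg, centralizer_conj']
    by_cases hr1 : ((d 0 * (d 1)⁻¹ : kˣ) : k) = 1
    · left
      have hre : d 0 * (d 1)⁻¹ = (1 : kˣ) := Units.ext (by rw [hr1]; rfl)
      rw [hre, mk_orbit_smul]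
    · by_cases hrm1 : ((d 0 * (d 1)⁻¹ : kˣ) : k) = -1
      · right; right
        have hre : d 0 * (d 1)⁻¹ = (-1 : kˣ) := Units.ext (by rw [hrm1]; simp)
        rw [hre, mk_orbit_smul]
      · right; left
        rw [centralizer_tEl hchar hr1 hrm1, ← centralizer_tEl hchar ha1 ham1, mk_orbit_smul]
  · rintro (rfl | rfl | rfl)
    · exact ⟨tEl 1, ⟨1, ![1, 1], by rw [one_mul, inv_one, mul_one]; rfl⟩, rfl⟩
    · exact ⟨tEl a₀, ⟨1, ![a₀, 1], by rw [one_mul, inv_one, mul_one]; rfl⟩, rfl⟩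
    · exact ⟨tEl (-1), ⟨1, ![-1, 1], by rw [one_mul, inv_one, mul_one]; rfl⟩, rfl⟩

lemma distinct12 (hchar : (2 : k) ≠ 0) {a₀ : kˣ} (ha₀ : (a₀ : k) * a₀ ≠ 1)
    (ha1 : (a₀ : k) ≠ 1) (ham1 : (a₀ : k) ≠ -1) :
    Quotient.mk (MulAction.orbitRel
        (ConjAct (GL (Fin 2) k ⧸ Subgroup.center (GL (Fin 2) k)))
        (Subgroup (GL (Fin 2) k ⧸ Subgroup.center (GL (Fin 2) k))))
      (Subgroup.centralizer {tEl (1 : kˣ)}) ≠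
    Quotient.mk _ (Subgroup.centralizer {tEl a₀}) := by
  intro h
  obtain ⟨hh, hsm⟩ := mk_orbit_exact h
  rw [centralizer_tEl hchar ha1 ham1, tEl_one, centralizer_one_eq_top] at hsm
  have hT : (TSub : Subgroup (GL (Fin 2) k ⧸ Subgroup.center (GL (Fin 2) k))) = ⊤ := by
    have h2 := congrArg (fun S => hh⁻¹ • S) hsm
    simpa [inv_smul_smul, conj_smul_top] using h2
  refine w_t_not_comm ha₀ (TSub_abelian _ (tEl_mem_TSub a₀) _ ?_)
  rw [hT]; exact Subgroup.mem_top _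

lemma distinct13 (hchar : (2 : k) ≠ 0) :
    Quotient.mk (MulAction.orbitRel
        (ConjAct (GL (Fin 2) k ⧸ Subgroup.center (GL (Fin 2) k)))
        (Subgroup (GL (Fin 2) k ⧸ Subgroup.center (GL (Fin 2) k))))
      (Subgroup.centralizer {tEl (1 : kˣ)}) ≠
    Quotient.mk _ (Subgroup.centralizer {tEl (-1 : kˣ)}) := by
  intro h
  obtain ⟨hh, hsm⟩ := mk_orbit_exact h
  rw [tEl_one, centralizer_one_eq_top] at hsm
  have hN : Subgroup.centralizer {tEl (-1 : kˣ)} = ⊤ := by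
    have h2 := congrArg (fun S => hh⁻¹ • S) hsm
    simpa [inv_smul_smul, conj_smul_top] using h2
  exact u_not_mem_N hchar (by rw [hN]; exact Subgroup.mem_top _)

lemma distinct23 (hchar : (2 : k) ≠ 0) {a₀ : kˣ} (ha₀ : (a₀ : k) * a₀ ≠ 1)
    (ha1 : (a₀ : k) ≠ 1) (ham1 : (a₀ : k) ≠ -1) :
    Quotient.mk (MulAction.orbitRel
        (ConjAct (GL (Fin 2) k ⧸ Subgroup.center (GL (Fin 2) k)))
        (Subgroup (GL (Fin 2) k ⧸ Subgroup.center (GL (Fin 2) k))))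
      (Subgroup.centralizer {tEl a₀}) ≠
    Quotient.mk _ (Subgroup.centralizer {tEl (-1 : kˣ)}) := by
  intro h
  obtain ⟨hh, hsm⟩ := mk_orbit_exact h
  rw [centralizer_tEl hchar ha1 ham1] at hsm
  have hN : Subgroup.centralizer {tEl (-1 : kˣ)} = hh⁻¹ • (TSub :
      Subgroup (GL (Fin 2) k ⧸ Subgroup.center (GL (Fin 2) k))) := by
    rw [← hsm, inv_smul_smul]
  have hab := conj_abelian (TSub_abelian (k := k)) hh⁻¹
  rw [← hN] at hab
  exact w_t_not_comm ha₀ (hab _ (t_mem_N a₀) _ w_mem_N)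

lemma part2_subset {a₀ : kˣ} (ha₀inv : a₀⁻¹ ≠ a₀) :
    {D : Quotient (MulAction.orbitRel (ConjAct (Equiv.Perm (Fin 2)))
        (Subgroup (Equiv.Perm (Fin 2)))) |
      ∃ a : kˣ, D = Quotient.mk (MulAction.orbitRel (ConjAct (Equiv.Perm (Fin 2)))
          (Subgroup (Equiv.Perm (Fin 2))))
        (MulAction.stabilizer (Equiv.Perm (Fin 2)) a)} =
    {Quotient.mk _ (⊤ : Subgroup (Equiv.Perm (Fin 2))),
     Quotient.mk _ (⊥ : Subgroup (Equiv.Perm (Fin 2)))} := by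
  ext D
  simp only [Set.mem_setOf_eq, Set.mem_insert_iff, Set.mem_singleton_iff]
  constructor
  · rintro ⟨a, rfl⟩
    by_cases h : a⁻¹ = a
    · left; rw [stab_eq_top_of h]
    · right; rw [stab_eq_bot_of h]
  · rintro (rfl | rfl)
    · exact ⟨1, by rw [stab_eq_top_of inv_one]⟩
    · exact ⟨a₀, by rw [stab_eq_bot_of ha₀inv]⟩

lemma part2_distinct :
    Quotient.mk (MulAction.orbitRel (ConjAct (Equiv.Perm (Fin 2)))
        (Subgroup (Equiv.Perm (Fin 2)))) (⊤ : Subgroup (Equiv.Perm (Fin 2))) ≠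
    Quotient.mk _ (⊥ : Subgroup (Equiv.Perm (Fin 2))) := by
  intro h
  obtain ⟨hh, hsm⟩ := mk_orbit_exact h
  rw [Subgroup.smul_bot] at hsm
  have : Equiv.swap (0 : Fin 2) 1 ∈ (⊥ : Subgroup (Equiv.Perm (Fin 2))) := by
    rw [hsm]; exact Subgroup.mem_top _
  rw [Subgroup.mem_bot] at this
  exact (by decide : Equiv.swap (0 : Fin 2) 1 ≠ 1) this

end PGLAux

theorem pgl2_centralizer_classes_three_weyl_stabilizer_classes_two
    [IsAlgClosed k] (hchar : (2 : k) ≠ 0) :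
    Nat.card {C : Quotient (MulAction.orbitRel
        (ConjAct (GL (Fin 2) k ⧸ Subgroup.center (GL (Fin 2) k)))
        (Subgroup (GL (Fin 2) k ⧸ Subgroup.center (GL (Fin 2) k)))) //
      ∃ g : GL (Fin 2) k ⧸ Subgroup.center (GL (Fin 2) k), IsSemisimplePGL2 g ∧
        C = Quotient.mk (MulAction.orbitRel
            (ConjAct (GL (Fin 2) k ⧸ Subgroup.center (GL (Fin 2) k)))
            (Subgroup (GL (Fin 2) k ⧸ Subgroup.center (GL (Fin 2) k))))
          (Subgroup.centralizer {g})} = 3 ∧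
    Nat.card {D : Quotient (MulAction.orbitRel (ConjAct (Equiv.Perm (Fin 2)))
        (Subgroup (Equiv.Perm (Fin 2)))) //
      ∃ a : kˣ, D = Quotient.mk (MulAction.orbitRel (ConjAct (Equiv.Perm (Fin 2)))
          (Subgroup (Equiv.Perm (Fin 2))))
        (MulAction.stabilizer (Equiv.Perm (Fin 2)) a)} = 2 := by
  obtain ⟨a₀, ha₀⟩ := PGLAux.exists_a0 (k := k)
  have ha1 : (a₀ : k) ≠ 1 := fun h => ha₀ (by rw [h]; ring)
  have ham1 : (a₀ : k) ≠ -1 := fun h => ha₀ (by rw [h]; ring)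
  have ha₀inv : a₀⁻¹ ≠ a₀ := by
    intro h
    apply ha₀
    have h2 : a₀ * a₀ = 1 := by nth_rewrite 1 [← h]; exact inv_mul_cancel a₀
    have h3 := congrArg Units.val h2
    push_cast at h3
    exact h3
  constructor
  · rw [show ({C : Quotient (MulAction.orbitRel
        (ConjAct (GL (Fin 2) k ⧸ Subgroup.center (GL (Fin 2) k)))
        (Subgroup (GL (Fin 2) k ⧸ Subgroup.center (GL (Fin 2) k)))) //
      ∃ g : GL (Fin 2) k ⧸ Subgroup.center (GL (Fin 2) k), IsSemisimplePGL2 g ∧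
        C = Quotient.mk (MulAction.orbitRel
            (ConjAct (GL (Fin 2) k ⧸ Subgroup.center (GL (Fin 2) k)))
            (Subgroup (GL (Fin 2) k ⧸ Subgroup.center (GL (Fin 2) k))))
          (Subgroup.centralizer {g})} : Type _) =
      ({C : Quotient (MulAction.orbitRel
        (ConjAct (GL (Fin 2) k ⧸ Subgroup.center (GL (Fin 2) k)))
        (Subgroup (GL (Fin 2) k ⧸ Subgroup.center (GL (Fin 2) k)))) |
      ∃ g : GL (Fin 2) k ⧸ Subgroup.center (GL (Fin 2) k), IsSemisimplePGL2 g ∧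
        C = Quotient.mk (MulAction.orbitRel
            (ConjAct (GL (Fin 2) k ⧸ Subgroup.center (GL (Fin 2) k)))
            (Subgroup (GL (Fin 2) k ⧸ Subgroup.center (GL (Fin 2) k))))
          (Subgroup.centralizer {g})} : Set _) from rfl]
    rw [Nat.card_coe_set_eq, PGLAux.part1_subset hchar ha1 ham1]
    rw [Set.ncard_eq_three]
    exact ⟨_, _, _, PGLAux.distinct12 hchar ha₀ ha1 ham1, PGLAux.distinct13 hchar,
      PGLAux.distinct23 hchar ha₀ ha1 ham1, rfl⟩
  · rw [show ({D : Quotient (MulAction.orbitRel (ConjAct (Equiv.Perm (Fin 2)))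
        (Subgroup (Equiv.Perm (Fin 2)))) //
      ∃ a : kˣ, D = Quotient.mk (MulAction.orbitRel (ConjAct (Equiv.Perm (Fin 2)))
          (Subgroup (Equiv.Perm (Fin 2))))
        (MulAction.stabilizer (Equiv.Perm (Fin 2)) a)} : Type _) =
      ({D : Quotient (MulAction.orbitRel (ConjAct (Equiv.Perm (Fin 2)))
        (Subgroup (Equiv.Perm (Fin 2)))) |
      ∃ a : kˣ, D = Quotient.mk (MulAction.orbitRel (ConjAct (Equiv.Perm (Fin 2)))
          (Subgroup (Equiv.Perm (Fin 2))))
        (MulAction.stabilizer (Equiv.Perm (Fin 2)) a)} : Set _) from rfl]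
    rw [Nat.card_coe_set_eq, PGLAux.part2_subset ha₀inv]
    exact Set.ncard_pair PGLAux.part2_distinct
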